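/- Independence of disequations: let C be a solved deducibility constraint system and let t1 ≠ u1, ..., tn ≠ un be disequations between terms whose variables are contained in V(C), such that for every i the terms ti and ui are not syntactically identical. Then there exists a solution θ of C such that tiθ ≠ uiθ for every i. -/

import Mathlib

open scoped Classical

/-- Terms built from names, variables, pairing, symmetric/asymmetric encryption,
signatures and private keys. -/
inductive Tm where
  | var : ℕ → Tm
  | name : ℕ → Tm
  | pair : Tm → Tm → Tm
  | enc : Tm → Tm → Tm
  | enca : Tm → Tm → Tm
  | sign : Tm → Tm → Tm
  | priv : Tm → Tm
deriving DecidableEq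

namespace Tm

/-- The variables of a term. -/
def vars : Tm → Finset ℕ
  | var x => {x}
  | name _ => ∅
  | pair s t => s.vars ∪ t.vars
  | enc s t => s.vars ∪ t.vars
  | enca s t => s.vars ∪ t.vars
  | sign s t => s.vars ∪ t.vars
  | priv t => t.vars

/-- The subterms of a term. -/
def subterms : Tm → Finset Tm
  | var x => {var x}
  | name a => {name a}
  | pair s t => insert (pair s t) (s.subterms ∪ t.subterms)
  | enc s t => insert (enc s t) (s.subterms ∪ t.subterms)
  | enca s t => insert (enca s t) (s.subterms ∪ t.subterms)
  | sign s t => insert (sign s t) (s.subterms ∪ t.subterms)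
  | priv t => insert (priv t) t.subterms

/-- A term is a variable. -/
def IsVar : Tm → Prop
  | var _ => True
  | _ => False

end Tm

/-- The Dolev-Yao deduction relation `T ⊢ u`. -/
inductive Deduce : Finset Tm → Tm → Prop where
  | ax {T u} : u ∈ T → Deduce T u
  | pairI {T x y} : Deduce T x → Deduce T y → Deduce T (Tm.pair x y)
  | encI {T x y} : Deduce T x → Deduce T y → Deduce T (Tm.enc x y)
  | encaI {T x y} : Deduce T x → Deduce T y → Deduce T (Tm.enca x y)
  | signI {T x y} : Deduce T x → Deduce T y → Deduce T (Tm.sign x y)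
  | encE {T x y} : Deduce T (Tm.enc x y) → Deduce T y → Deduce T x
  | encaE {T x y} : Deduce T (Tm.enca x y) → Deduce T (Tm.priv y) → Deduce T x
  | fstE {T x y} : Deduce T (Tm.pair x y) → Deduce T x
  | sndE {T x y} : Deduce T (Tm.pair x y) → Deduce T y

/-- Substitutions. -/
def Subst := ℕ → Tm

/-- Applying a substitution to a term. -/
def Tm.subst (σ : Subst) : Tm → Tm
  | .var x => σ x
  | .name a => .name a
  | .pair s t => .pair (s.subst σ) (t.subst σ)
  | .enc s t => .enc (s.subst σ) (t.subst σ)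
  | .enca s t => .enca (s.subst σ) (t.subst σ)
  | .sign s t => .sign (s.subst σ) (t.subst σ)
  | .priv t => .priv (t.subst σ)

/-- The identity substitution. -/
def idSubst : Subst := Tm.var

/-- Composition of substitutions: `σ.comp τ` applies `σ` first, then `τ`. -/
def Subst.comp (σ τ : Subst) : Subst := fun x => (σ x).subst τ

/-- The variables of a finite set of terms. -/
def setVars (T : Finset Tm) : Finset ℕ := T.sup Tm.vars

/-- The subterms of a finite set of terms. -/
def stSet (T : Finset Tm) : Finset Tm := T.sup Tm.subterms

/-- A deducibility constraint `T ⊩ u`: a (nonempty) finite set of terms and a term. -/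
abbrev Cst := Finset Tm × Tm

/-- Applying a substitution to a constraint. -/
def conSubst (σ : Subst) (c : Cst) : Cst := (c.1.image (Tm.subst σ), c.2.subst σ)

/-- Applying a substitution to a constraint system. -/
def csSubst (σ : Subst) (S : Finset Cst) : Finset Cst := S.image (conSubst σ)

/-- The variables of a constraint system. -/
def sysVars (C : Finset Cst) : Finset ℕ := C.sup (fun c => setVars c.1 ∪ c.2.vars)

/-- The set `{x | (T' ⊩ x) ∈ S, T' ⊊ T}` of variables (as terms) occurring as
right-hand sides of constraints of `S` whose left-hand side is strictly contained in `T`. -/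
noncomputable def extraVars (S : Finset Cst) (T : Finset Tm) : Finset Tm :=
  (S.filter (fun c => c.1 ⊂ T ∧ c.2.IsVar)).image Prod.snd

/-- `C` is a deducibility constraint system: left-hand sides are nonempty,
totally ordered by inclusion, and every variable of a left-hand side `T` occurs in
the right-hand side of a constraint whose left-hand side is minimal among those whose
right-hand side contains the variable, and strictly included in `T`. -/
def IsCS (C : Finset Cst) : Prop :=
  (∀ c ∈ C, c.1.Nonempty) ∧
  (∀ c ∈ C, ∀ c' ∈ C, c.1 ⊆ c'.1 ∨ c'.1 ⊆ c.1) ∧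
  (∀ c ∈ C, ∀ x ∈ setVars c.1,
    ∃ c' ∈ C, x ∈ c'.2.vars ∧ c'.1 ⊂ c.1 ∧
      ∀ c'' ∈ C, x ∈ c''.2.vars → c'.1 ⊆ c''.1)

/-- A solution of a constraint system: a ground substitution whose domain is `V(C)`
such that `Tθ ⊢ uθ` for every constraint `(T ⊩ u) ∈ C`. -/
def IsSolution (θ : Subst) (C : Finset Cst) : Prop :=
  (∀ x ∈ sysVars C, (θ x).vars = ∅) ∧
  (∀ x, x ∉ sysVars C → θ x = Tm.var x) ∧
  (∀ c ∈ C, Deduce (c.1.image (Tm.subst θ)) (c.2.subst θ))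

/-- A (non-`⊥`) constraint system is solved if all right-hand sides are variables. -/
def Solved (C : Finset Cst) : Prop := ∀ c ∈ C, c.2.IsVar

/-- `σ` is a most general unifier of `t` and `u`. -/
def IsMGU (σ : Subst) (t u : Tm) : Prop :=
  t.subst σ = u.subst σ ∧
  (∀ x, x ∉ t.vars ∪ u.vars → σ x = Tm.var x) ∧
  (∀ x, (σ x).vars ⊆ t.vars ∪ u.vars) ∧
  (∀ δ : Subst, t.subst δ = u.subst δ → ∃ ρ : Subst, ∀ x, δ x = (σ x).subst ρ)

/-- The binary constructors `pair`, `enc`, `enca`, `sign`. -/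
inductive BinOp where
  | pair | enc | enca | sign

def BinOp.app : BinOp → Tm → Tm → Tm
  | .pair => Tm.pair
  | .enc => Tm.enc
  | .enca => Tm.enca
  | .sign => Tm.sign

/-- One step of simplification `C ⇝_σ C'` (result `none` represents `⊥`),
given by the rules R1, R2, R3, R3', R4, Rf. -/
inductive Step : Finset Cst → Subst → Option (Finset Cst) → Prop where
  | r1 {S : Finset Cst} {T : Finset Tm} {u : Tm} :
      (T, u) ∈ S →
      Deduce (T ∪ extraVars (S.erase (T, u)) T) u →
      Step S idSubst (some (S.erase (T, u)))
  | r2 {S : Finset Cst} {T : Finset Tm} {u t : Tm} {σ : Subst} :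
      (T, u) ∈ S → t ∈ stSet T → ¬ t.IsVar → ¬ u.IsVar → t ≠ u →
      IsMGU σ t u →
      Step S σ (some (csSubst σ S))
  | r3 {S : Finset Cst} {T : Finset Tm} {u t₁ t₂ : Tm} {σ : Subst} :
      (T, u) ∈ S → t₁ ∈ stSet T → t₂ ∈ stSet T → ¬ t₁.IsVar → ¬ t₂.IsVar →
      t₁ ≠ t₂ → IsMGU σ t₁ t₂ →
      Step S σ (some (csSubst σ S))
  | r3' {S : Finset Cst} {T : Finset Tm} {u t₁ t₂ t₃ : Tm} {σ : Subst} :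
      (T, u) ∈ S → Tm.enca t₁ t₂ ∈ stSet T → Tm.priv t₃ ∈ stSet T →
      t₂ ≠ t₃ → (t₂.IsVar ∨ t₃.IsVar) → IsMGU σ t₂ t₃ →
      Step S σ (some (csSubst σ S))
  | r4 {S : Finset Cst} {T : Finset Tm} {u : Tm} :
      (T, u) ∈ S → setVars T ∪ u.vars = ∅ → ¬ Deduce T u →
      Step S idSubst none
  | rf {S : Finset Cst} {T : Finset Tm} {u v : Tm} (b : BinOp) :
      (T, b.app u v) ∈ S →
      Step S idSubst (some (insert (T, u) (insert (T, v) (S.erase (T, b.app u v)))))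

/-- Sequences of simplification steps `C ⇝*_σ C'`, composing the substitutions. -/
inductive Steps : Finset Cst → Subst → Option (Finset Cst) → Prop where
  | refl (S) : Steps S idSubst (some S)
  | tail {S : Finset Cst} {σ : Subst} {S' : Finset Cst} {τ : Subst} {R} :
      Steps S σ (some S') → Step S' τ R → Steps S (σ.comp τ) R

/-- A security property, identified with its set of solutions (ground substitutions
making it true); `θ` solves `φσ` iff `σθ` solves `φ`. -/
def SecProp := Subst → Prop

/-- The instance `φσ` of a security property `φ` by a substitution `σ`. -/
def SecProp.subst (φ : SecProp) (σ : Subst) : SecProp := fun θ => φ (σ.comp θ)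

/-- `θ` is an attack for `φ` and `C` if it is a solution of both. -/
def IsAttack (θ : Subst) (C : Finset Cst) (φ : SecProp) : Prop :=
  IsSolution θ C ∧ φ θ

/-- One memorizing simplification step: `C;D ⇒_σ (C' \ D); (D ∪ (C \ C'))`. -/
inductive MStep : Finset Cst × Finset Cst → Subst → Finset Cst × Finset Cst → Prop where
  | mk {C D C' : Finset Cst} {σ : Subst} :
      Step C σ (some C') → MStep (C, D) σ (C' \ D, D ∪ (C \ C'))

/-- Sequences of memorizing simplification steps, composing the substitutions. -/
inductive MSteps : Finset Cst × Finset Cst → Subst → Finset Cst × Finset Cst → Prop where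
  | refl (P) : MSteps P idSubst P
  | tail {P : Finset Cst × Finset Cst} {σ : Subst} {Q : Finset Cst × Finset Cst}
      {τ : Subst} {R : Finset Cst × Finset Cst} :
      MSteps P σ Q → MStep Q τ R → MSteps P (σ.comp τ) R

namespace DisIndep

/-- Size of a term. -/
def sz : Tm → ℕ
  | .var _ => 1
  | .name _ => 1
  | .pair s t => 1 + sz s + sz t
  | .enc s t => 1 + sz s + sz t
  | .enca s t => 1 + sz s + sz t
  | .sign s t => 1 + sz s + sz t
  | .priv t => 1 + sz t

lemma sz_pos (t : Tm) : 1 ≤ sz t := by cases t <;> simp [sz] <;> omega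

/-- Towers of pairs over a base term. -/
def tower (b : Tm) : ℕ → Tm
  | 0 => b
  | n+1 => .pair (tower b n) (tower b n)

lemma sz_tower (b : Tm) (n : ℕ) : sz (tower b n) + 1 = 2 ^ n * (sz b + 1) := by
  induction n with
  | zero => simp [tower]
  | succ n ih =>
      simp only [tower, sz, pow_succ]
      have h : 2 ^ n * 2 * (sz b + 1) = 2 * (2 ^ n * (sz b + 1)) := by ring
      omega

lemma vars_tower (b : Tm) (n : ℕ) : (tower b n).vars = b.vars := by
  induction n with
  | zero => rfl
  | succ n ih => simp [tower, Tm.vars, ih]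

lemma sz_tower_mono (b : Tm) {n m : ℕ} (h : n ≤ m) :
    sz (tower b n) ≤ sz (tower b m) := by
  have h1 := sz_tower b n
  have h2 := sz_tower b m
  have := Nat.mul_le_mul (Nat.pow_le_pow_right (by norm_num : 1 ≤ 2) h)
    (le_refl (sz b + 1))
  omega

lemma tower_inj (b : Tm) {n m : ℕ} (h : tower b n = tower b m) : n = m := by
  have h1 := sz_tower b n
  have h2 := sz_tower b m
  rw [h] at h1
  have he : 2 ^ n * (sz b + 1) = 2 ^ m * (sz b + 1) := by omega
  have := Nat.eq_of_mul_eq_mul_right (Nat.succ_pos (sz b)) he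
  exact Nat.pow_right_injective (le_refl 2) this

lemma subst_congr {σ τ : Subst} : ∀ t : Tm, (∀ y ∈ t.vars, σ y = τ y) →
    t.subst σ = t.subst τ := by
  intro t
  induction t with
  | var x => intro h; exact h x (by simp [Tm.vars])
  | name a => intro _; rfl
  | pair s t ihs iht =>
      intro h
      simp only [Tm.subst]
      rw [ihs (fun y hy => h y (by simp [Tm.vars, hy])),
        iht (fun y hy => h y (by simp [Tm.vars, hy]))]
  | enc s t ihs iht =>
      intro h
      simp only [Tm.subst]
      rw [ihs (fun y hy => h y (by simp [Tm.vars, hy])),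
        iht (fun y hy => h y (by simp [Tm.vars, hy]))]
  | enca s t ihs iht =>
      intro h
      simp only [Tm.subst]
      rw [ihs (fun y hy => h y (by simp [Tm.vars, hy])),
        iht (fun y hy => h y (by simp [Tm.vars, hy]))]
  | sign s t ihs iht =>
      intro h
      simp only [Tm.subst]
      rw [ihs (fun y hy => h y (by simp [Tm.vars, hy])),
        iht (fun y hy => h y (by simp [Tm.vars, hy]))]
  | priv t iht =>
      intro h
      simp only [Tm.subst]
      rw [iht (fun y hy => h y (by simpa [Tm.vars] using hy))]

lemma subst_id : ∀ t : Tm, t.subst idSubst = t := by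
  intro t
  induction t <;> simp_all [Tm.subst, idSubst]

lemma subst_ground {t : Tm} (h : t.vars = ∅) (σ : Subst) : t.subst σ = t := by
  have : t.subst σ = t.subst idSubst := by
    apply subst_congr
    intro y hy
    rw [h] at hy
    exact absurd hy (Finset.notMem_empty y)
  rw [this, subst_id]

lemma sz_subst_le {σ : Subst} {M : ℕ} (hM : 1 ≤ M) :
    ∀ t : Tm, (∀ y ∈ t.vars, sz (σ y) ≤ M) → sz (t.subst σ) ≤ sz t * M := by
  intro t
  induction t with
  | var x => intro h; simpa [Tm.subst, sz] using h x (by simp [Tm.vars])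
  | name a => intro _; simpa [Tm.subst, sz] using hM
  | pair s t ihs iht =>
      intro h
      have hs := ihs (fun y hy => h y (by simp [Tm.vars, hy]))
      have ht := iht (fun y hy => h y (by simp [Tm.vars, hy]))
      simp only [Tm.subst, sz]
      nlinarith
  | enc s t ihs iht =>
      intro h
      have hs := ihs (fun y hy => h y (by simp [Tm.vars, hy]))
      have ht := iht (fun y hy => h y (by simp [Tm.vars, hy]))
      simp only [Tm.subst, sz]
      nlinarith
  | enca s t ihs iht =>
      intro h
      have hs := ihs (fun y hy => h y (by simp [Tm.vars, hy]))
      have ht := iht (fun y hy => h y (by simp [Tm.vars, hy]))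
      simp only [Tm.subst, sz]
      nlinarith
  | sign s t ihs iht =>
      intro h
      have hs := ihs (fun y hy => h y (by simp [Tm.vars, hy]))
      have ht := iht (fun y hy => h y (by simp [Tm.vars, hy]))
      simp only [Tm.subst, sz]
      nlinarith
  | priv t iht =>
      intro h
      have ht := iht (fun y hy => h y (by simpa [Tm.vars] using hy))
      simp only [Tm.subst, sz]
      nlinarith

lemma sz_subst_ge {σ : Subst} {y : ℕ} :
    ∀ t : Tm, y ∈ t.vars → sz (σ y) ≤ sz (t.subst σ) := by
  intro t
  induction t with
  | var x =>
      intro h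
      simp [Tm.vars] at h
      simp [Tm.subst, h]
  | name a => intro h; simp [Tm.vars] at h
  | pair s t ihs iht =>
      intro h
      simp only [Tm.vars, Finset.mem_union] at h
      simp only [Tm.subst, sz]
      rcases h with h | h
      · have := ihs h; omega
      · have := iht h; omega
  | enc s t ihs iht =>
      intro h
      simp only [Tm.vars, Finset.mem_union] at h
      simp only [Tm.subst, sz]
      rcases h with h | h
      · have := ihs h; omega
      · have := iht h; omega
  | enca s t ihs iht =>
      intro h
      simp only [Tm.vars, Finset.mem_union] at h
      simp only [Tm.subst, sz]
      rcases h with h | h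
      · have := ihs h; omega
      · have := iht h; omega
  | sign s t ihs iht =>
      intro h
      simp only [Tm.vars, Finset.mem_union] at h
      simp only [Tm.subst, sz]
      rcases h with h | h
      · have := ihs h; omega
      · have := iht h; omega
  | priv t iht =>
      intro h
      simp only [Tm.vars] at h
      have := iht h
      simp only [Tm.subst, sz]
      omega

lemma sz_subst_gt {σ : Subst} {y : ℕ} {t : Tm} (h : y ∈ t.vars)
    (ht : ¬ t.IsVar) : sz (σ y) < sz (t.subst σ) := by
  cases t with
  | var x => exact absurd trivial ht
  | name a => simp [Tm.vars] at h
  | pair s t =>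
      simp only [Tm.vars, Finset.mem_union] at h
      simp only [Tm.subst, sz]
      rcases h with h | h
      · have := sz_subst_ge (σ := σ) s h; omega
      · have := sz_subst_ge (σ := σ) t h; omega
  | enc s t =>
      simp only [Tm.vars, Finset.mem_union] at h
      simp only [Tm.subst, sz]
      rcases h with h | h
      · have := sz_subst_ge (σ := σ) s h; omega
      · have := sz_subst_ge (σ := σ) t h; omega
  | enca s t =>
      simp only [Tm.vars, Finset.mem_union] at h
      simp only [Tm.subst, sz]
      rcases h with h | h
      · have := sz_subst_ge (σ := σ) s h; omega
      · have := sz_subst_ge (σ := σ) t h; omega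
  | sign s t =>
      simp only [Tm.vars, Finset.mem_union] at h
      simp only [Tm.subst, sz]
      rcases h with h | h
      · have := sz_subst_ge (σ := σ) s h; omega
      · have := sz_subst_ge (σ := σ) t h; omega
  | priv t =>
      simp only [Tm.vars] at h
      have := sz_subst_ge (σ := σ) t h
      simp only [Tm.subst, sz]
      omega

lemma deduce_tower {T : Finset Tm} {b : Tm} (h : Deduce T b) (n : ℕ) :
    Deduce T (tower b n) := by
  induction n with
  | zero => exact h
  | succ n ih => exact Deduce.pairI ih ih

/-- The canonical tower substitution. -/
def th (b : Tm) (K : ℕ) : Subst := fun y => tower b (K * (y + 1))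

lemma key_var (b : Tm) (K : ℕ) (hK : 1 ≤ K) (x : ℕ) (u : Tm)
    (hu : ¬ u.IsVar) (h2 : 2 * sz u + 2 ≤ 2 ^ K) :
    th b K x ≠ u.subst (th b K) := by
  by_cases hy : ∃ y ∈ u.vars, x ≤ y
  · obtain ⟨y, hyv, hxy⟩ := hy
    have h1 := sz_subst_gt (σ := th b K) hyv hu
    have mono : sz (th b K x) ≤ sz (th b K y) := by
      simp only [th]
      exact sz_tower_mono b (Nat.mul_le_mul le_rfl (by omega))
    intro he
    rw [← he] at h1
    omega
  · push_neg at hy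
    set M := 2 ^ (K * x) * (sz b + 1) with hMdef
    have hM1 : 1 ≤ M := Nat.one_le_iff_ne_zero.2 (by positivity)
    have hb : ∀ y ∈ u.vars, sz (th b K y) ≤ M := by
      intro y hyv
      have hle : K * (y + 1) ≤ K * x :=
        Nat.mul_le_mul le_rfl (by have := hy y hyv; omega)
      have h1 := sz_tower b (K * (y + 1))
      have h3 := Nat.mul_le_mul
        (Nat.pow_le_pow_right (by norm_num : 1 ≤ 2) hle) (le_refl (sz b + 1))
      simp only [th]
      omega
    have hle := sz_subst_le hM1 u hb
    have hx : sz (th b K x) + 1 = 2 ^ K * M := by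
      have h1 := sz_tower b (K * (x + 1))
      have h6 : (2:ℕ) ^ (K * (x + 1)) * (sz b + 1)
          = 2 ^ K * (2 ^ (K * x) * (sz b + 1)) := by
        rw [show K * (x + 1) = K + K * x by ring, pow_add]
        ring
      simp only [th]
      rw [hMdef]
      omega
    have h4 : (2 * sz u + 2) * M ≤ 2 ^ K * M := Nat.mul_le_mul h2 le_rfl
    have h5 : (2 * sz u + 2) * M = 2 * (sz u * M) + 2 * M := by ring
    intro he
    have hgg : sz (th b K x) = sz (u.subst (th b K)) := by rw [he]
    omega

lemma key (b : Tm) (K : ℕ) (hK : 1 ≤ K) :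
    ∀ t u : Tm, t ≠ u → 2 * (sz t + sz u) + 2 ≤ 2 ^ K →
    t.subst (th b K) ≠ u.subst (th b K) := by
  intro t
  induction t with
  | var x =>
      intro u hne hsz
      cases u with
      | var y =>
          simp only [Tm.subst, th]
          intro he
          have := tower_inj b he
          have : x = y := by
            have hxy := Nat.eq_of_mul_eq_mul_left (by omega : 0 < K) this
            omega
          exact hne (by rw [this])
      | name a => exact key_var b K hK x _ (by simp [Tm.IsVar]) (by simp [sz] at hsz ⊢; omega)
      | pair s t => exact key_var b K hK x _ (by simp [Tm.IsVar]) (by have := sz_pos (Tm.pair s t); omega)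
      | enc s t => exact key_var b K hK x _ (by simp [Tm.IsVar]) (by have := sz_pos (Tm.enc s t); omega)
      | enca s t => exact key_var b K hK x _ (by simp [Tm.IsVar]) (by have := sz_pos (Tm.enca s t); omega)
      | sign s t => exact key_var b K hK x _ (by simp [Tm.IsVar]) (by have := sz_pos (Tm.sign s t); omega)
      | priv t => exact key_var b K hK x _ (by simp [Tm.IsVar]) (by have := sz_pos (Tm.priv t); omega)
  | name a =>
      intro u hne hsz
      cases u with
      | var y => exact (key_var b K hK y _ (by simp [Tm.IsVar]) (by simp [sz] at hsz ⊢; omega)).symm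
      | name b' => simp only [Tm.subst]; simpa using hne
      | pair s t => simp [Tm.subst]
      | enc s t => simp [Tm.subst]
      | enca s t => simp [Tm.subst]
      | sign s t => simp [Tm.subst]
      | priv t => simp [Tm.subst]
  | pair t1 t2 ih1 ih2 =>
      intro u hne hsz
      cases u with
      | var y => exact (key_var b K hK y _ (by simp [Tm.IsVar]) (by simp [sz] at hsz ⊢; omega)).symm
      | name a => simp [Tm.subst]
      | pair u1 u2 =>
          simp only [Tm.subst, ne_eq, Tm.pair.injEq, not_and]
          simp only [sz] at hsz
          intro he1 he2
          by_cases h : t1 = u1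
          · exact ih2 u2 (fun h2 => hne (by rw [h, h2])) (by omega) he2
          · exact ih1 u1 h (by omega) he1
      | enc s t => simp [Tm.subst]
      | enca s t => simp [Tm.subst]
      | sign s t => simp [Tm.subst]
      | priv t => simp [Tm.subst]
  | enc t1 t2 ih1 ih2 =>
      intro u hne hsz
      cases u with
      | var y => exact (key_var b K hK y _ (by simp [Tm.IsVar]) (by simp [sz] at hsz ⊢; omega)).symm
      | name a => simp [Tm.subst]
      | pair s t => simp [Tm.subst]
      | enc u1 u2 =>
          simp only [Tm.subst, ne_eq, Tm.enc.injEq, not_and]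
          simp only [sz] at hsz
          intro he1 he2
          by_cases h : t1 = u1
          · exact ih2 u2 (fun h2 => hne (by rw [h, h2])) (by omega) he2
          · exact ih1 u1 h (by omega) he1
      | enca s t => simp [Tm.subst]
      | sign s t => simp [Tm.subst]
      | priv t => simp [Tm.subst]
  | enca t1 t2 ih1 ih2 =>
      intro u hne hsz
      cases u with
      | var y => exact (key_var b K hK y _ (by simp [Tm.IsVar]) (by simp [sz] at hsz ⊢; omega)).symm
      | name a => simp [Tm.subst]
      | pair s t => simp [Tm.subst]
      | enc s t => simp [Tm.subst]
      | enca u1 u2 =>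
          simp only [Tm.subst, ne_eq, Tm.enca.injEq, not_and]
          simp only [sz] at hsz
          intro he1 he2
          by_cases h : t1 = u1
          · exact ih2 u2 (fun h2 => hne (by rw [h, h2])) (by omega) he2
          · exact ih1 u1 h (by omega) he1
      | sign s t => simp [Tm.subst]
      | priv t => simp [Tm.subst]
  | sign t1 t2 ih1 ih2 =>
      intro u hne hsz
      cases u with
      | var y => exact (key_var b K hK y _ (by simp [Tm.IsVar]) (by simp [sz] at hsz ⊢; omega)).symm
      | name a => simp [Tm.subst]
      | pair s t => simp [Tm.subst]
      | enc s t => simp [Tm.subst]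
      | enca s t => simp [Tm.subst]
      | sign u1 u2 =>
          simp only [Tm.subst, ne_eq, Tm.sign.injEq, not_and]
          simp only [sz] at hsz
          intro he1 he2
          by_cases h : t1 = u1
          · exact ih2 u2 (fun h2 => hne (by rw [h, h2])) (by omega) he2
          · exact ih1 u1 h (by omega) he1
      | priv t => simp [Tm.subst]
  | priv t1 ih1 =>
      intro u hne hsz
      cases u with
      | var y => exact (key_var b K hK y _ (by simp [Tm.IsVar]) (by simp [sz] at hsz ⊢; omega)).symm
      | name a => simp [Tm.subst]
      | pair s t => simp [Tm.subst]
      | enc s t => simp [Tm.subst]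
      | enca s t => simp [Tm.subst]
      | sign s t => simp [Tm.subst]
      | priv u1 =>
          simp only [Tm.subst, ne_eq, Tm.priv.injEq]
          simp only [sz] at hsz
          exact ih1 u1 (fun h => hne (by rw [h])) (by omega)

lemma isVar_iff {t : Tm} (h : t.IsVar) : ∃ x, t = Tm.var x := by
  cases t <;> simp [Tm.IsVar] at h ⊢

end DisIndep

/-- independence of disequations: a solved deducibility constraint
system always has a solution satisfying any finite set of syntactically nontrivial
disequations over its variables. -/
theorem independence_of_disequations (C : Finset Cst) (hC : IsCS C)
    (hsolved : Solved C) (ds : List (Tm × Tm))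
    (hvars : ∀ p ∈ ds, p.1.vars ∪ p.2.vars ⊆ sysVars C)
    (hne : ∀ p ∈ ds, p.1 ≠ p.2) :
    ∃ θ : Subst, IsSolution θ C ∧ ∀ p ∈ ds, p.1.subst θ ≠ p.2.subst θ := by
  classical
  open DisIndep in
  rcases C.eq_empty_or_nonempty with rfl | hCne
  · refine ⟨idSubst, ⟨?_, ?_, ?_⟩, ?_⟩
    · intro x hx; simp [sysVars] at hx
    · intro x _; rfl
    · intro c hc; exact absurd hc (Finset.notMem_empty c)
    · intro p hp
      rw [subst_id, subst_id]
      exact hne p hp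
  · -- a minimal left-hand side
    obtain ⟨c₀, hc₀, hmin'⟩ := C.exists_min_image (fun c => c.1.card) hCne
    have hmin : ∀ c ∈ C, c₀.1 ⊆ c.1 := by
      intro c hc
      rcases hC.2.1 c₀ hc₀ c hc with h | h
      · exact h
      · rw [Finset.eq_of_subset_of_card_le h (hmin' c hc)]
    -- the minimal left-hand side is ground
    have hT₀vars : setVars c₀.1 = ∅ := by
      by_contra hne'
      obtain ⟨x, hx⟩ := Finset.nonempty_iff_ne_empty.2 hne'
      obtain ⟨c', hc', _, hss, _⟩ := hC.2.2 c₀ hc₀ x hx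
      have hss2 := hss.trans_subset (hmin c' hc')
      rw [Finset.ssubset_def] at hss2
      exact hss2.2 hss2.1
    obtain ⟨t₀, ht₀⟩ := hC.1 c₀ hc₀
    have ht₀g : t₀.vars = ∅ := by
      have h : t₀.vars ≤ setVars c₀.1 := by
        unfold setVars
        exact Finset.le_sup ht₀
      rw [hT₀vars] at h
      exact Finset.subset_empty.mp h
    set S : ℕ := (ds.map (fun p => sz p.1 + sz p.2)).sum with hSdef
    set K : ℕ := 2 * S + 2 with hKdef
    have hK : 1 ≤ K := by omega
    set θ : Subst := fun x => if x ∈ sysVars C then tower t₀ (K * (x + 1)) else Tm.var x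
      with hθdef
    have hθth : ∀ x ∈ sysVars C, θ x = th t₀ K x := by
      intro x hx
      simp [hθdef, th, if_pos hx]
    refine ⟨θ, ⟨?_, ?_, ?_⟩, ?_⟩
    · intro x hx
      simp only [hθdef, if_pos hx]
      rw [vars_tower, ht₀g]
    · intro x hx
      simp [hθdef, if_neg hx]
    · intro c hc
      obtain ⟨x, hx⟩ := isVar_iff (hsolved c hc)
      have hxv : x ∈ sysVars C := by
        have hsub : setVars c.1 ∪ c.2.vars ⊆ sysVars C := by
          unfold sysVars
          exact Finset.le_sup (f := fun c : Cst => setVars c.1 ∪ c.2.vars) hc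
        apply hsub
        rw [hx]
        exact Finset.mem_union_right _ (by simp [Tm.vars])
      rw [hx]
      show Deduce _ (Tm.subst θ (Tm.var x))
      have : Tm.subst θ (Tm.var x) = tower t₀ (K * (x + 1)) := by
        simp [Tm.subst, hθdef, if_pos hxv]
      rw [this]
      apply deduce_tower
      apply Deduce.ax
      rw [← subst_ground ht₀g θ]
      exact Finset.mem_image_of_mem _ (hmin c hc ht₀)
    · intro p hp
      have hv1 : ∀ y ∈ p.1.vars, θ y = th t₀ K y := fun y hy =>
        hθth y (hvars p hp (Finset.mem_union_left _ hy))
      have hv2 : ∀ y ∈ p.2.vars, θ y = th t₀ K y := fun y hy =>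
        hθth y (hvars p hp (Finset.mem_union_right _ hy))
      rw [subst_congr p.1 hv1, subst_congr p.2 hv2]
      apply key t₀ K hK p.1 p.2 (hne p hp)
      have hmem : sz p.1 + sz p.2 ≤ S := by
        rw [hSdef]
        exact List.single_le_sum (fun a _ => Nat.zero_le a) _
          (List.mem_map_of_mem hp)
      have h2K : K < 2 ^ K := Nat.lt_two_pow_self
      omega
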